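/- Let G and G' be two groups each isomorphic to S₃ or Z/3Z, arising as Gal(M/K) and Gal(M'/K) for distinct fields M ≠ M' with both degrees divisible by 3. Then 3 does not divide [M ∩ M' : K], and consequently there exists σ ∈ Gal(MM'/K) whose restriction to M has order 3 and whose restriction to M' has order 3. -/

import Mathlib

open Module

set_option maxRecDepth 40000 in
private lemma perm3_cube :
    ∀ x : Equiv.Perm (Fin 3), ∃ a b : Equiv.Perm (Fin 3), a ^ 3 * b ^ 3 = x := by
  decide

private lemma ord_pow_not_dvd {A : Type*} [Group A] {a : A} (ha : orderOf a = 3)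
    {n : ℕ} (hn : ¬ 3 ∣ n) (hn0 : n ≠ 0) : orderOf (a ^ n) = 3 := by
  rw [orderOf_pow' a hn0, ha,
    (Nat.Prime.coprime_iff_not_dvd Nat.prime_three).mpr hn, Nat.div_one]

private lemma step {G A B : Type*} [Group G] [Group A] [Group B]
    (f : G →* A) (g : G →* B) (x : G) (h3 : orderOf (f x) = 3)
    (h6 : orderOf (g x) ∣ 6) :
    ∃ y : G, orderOf (f y) = 3 ∧ (orderOf (g y) = 3 ∨ g y = 1) := by
  have hfx3 : (f x) ^ 3 = 1 := by rw [← h3]; exact pow_orderOf_eq_one (f x)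
  have hmem : orderOf (g x) ∈ Nat.divisors 6 := Nat.mem_divisors.mpr ⟨h6, by norm_num⟩
  rw [show Nat.divisors 6 = {1, 2, 3, 6} from by decide] at hmem
  simp only [Finset.mem_insert, Finset.mem_singleton] at hmem
  rcases hmem with h | h | h | h
  · exact ⟨x, h3, Or.inr (orderOf_eq_one_iff.mp h)⟩
  · refine ⟨x ^ 4, ?_, Or.inr ?_⟩
    · rw [map_pow, show (f x) ^ 4 = f x from by rw [pow_succ, hfx3, one_mul], h3]
    · have hgx2 : (g x) ^ 2 = 1 := by rw [← h]; exact pow_orderOf_eq_one (g x)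
      rw [map_pow, show (4 : ℕ) = 2 * 2 from rfl, pow_mul, hgx2, one_pow]
  · exact ⟨x, h3, Or.inl h⟩
  · refine ⟨x ^ 2, ?_, Or.inl ?_⟩
    · rw [map_pow]; exact ord_pow_not_dvd h3 (by norm_num) (by norm_num)
    · rw [map_pow, orderOf_pow' _ (by norm_num : (2 : ℕ) ≠ 0), h]
      decide

private lemma aux_pair {G A B : Type*} [Group G] [Group A] [Group B] [Finite A] [Finite B]
    (f : G →* A) (g : G →* B) (hf : Function.Surjective f) (hg : Function.Surjective g)
    (hA : Nat.card A = 3 ∨ Nat.card A = 6) (hB : Nat.card B = 3 ∨ Nat.card B = 6) :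
    ∃ x : G, orderOf (f x) = 3 ∧ orderOf (g x) = 3 := by
  have : Fact (Nat.Prime 3) := ⟨Nat.prime_three⟩
  have hA3 : 3 ∣ Nat.card A := by rcases hA with h | h <;> omega
  have hB3 : 3 ∣ Nat.card B := by rcases hB with h | h <;> omega
  have hA6 : Nat.card A ∣ 6 := by rcases hA with h | h <;> rw [h] <;> norm_num
  have hB6 : Nat.card B ∣ 6 := by rcases hB with h | h <;> rw [h] <;> norm_num
  obtain ⟨a, ha⟩ := exists_prime_orderOf_dvd_card' (G := A) 3 hA3
  obtain ⟨x₀, hx₀⟩ := hf a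
  obtain ⟨y, hy3, hy⟩ := step f g x₀ (by rw [hx₀]; exact ha)
    ((orderOf_dvd_natCard (g x₀)).trans hB6)
  rcases hy with hy | hy
  · exact ⟨y, hy3, hy⟩
  obtain ⟨b, hb⟩ := exists_prime_orderOf_dvd_card' (G := B) 3 hB3
  obtain ⟨z₀, hz₀⟩ := hg b
  obtain ⟨z, hz3, hz⟩ := step g f z₀ (by rw [hz₀]; exact hb)
    ((orderOf_dvd_natCard (f z₀)).trans hA6)
  rcases hz with hz | hz
  · exact ⟨z, hz, hz3⟩
  refine ⟨y * z, ?_, ?_⟩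
  · rw [map_mul, hz, mul_one]; exact hy3
  · rw [map_mul, hy, one_mul]; exact hz3

private lemma card_cases {A : Type*} [Group A]
    (h : Nonempty (A ≃* Equiv.Perm (Fin 3)) ∨ Nonempty (A ≃* Multiplicative (ZMod 3))) :
    Nat.card A = 3 ∨ Nat.card A = 6 := by
  rcases h with ⟨⟨e⟩⟩ | ⟨⟨e⟩⟩
  · right
    rw [Nat.card_congr e.toEquiv, Nat.card_eq_fintype_card, Fintype.card_perm, Fintype.card_fin]
    rfl
  · left
    rw [Nat.card_congr e.toEquiv, Nat.card_eq_fintype_card]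
    simp

private lemma nat_36 {n : ℕ} (h3 : 3 ∣ n) (h6 : n ∣ 6) : n = 3 ∨ n = 6 := by
  have := Nat.le_of_dvd (by norm_num) h6
  interval_cases n <;> omega

/-- There is no Galois subextension `F ≤ M` of degree 3 over `K` when `Gal(M/K) ≅ S₃`,
since every element of `S₃` is a product of two cubes while `Gal(F/K)` has exponent 3. -/
private lemma s3_contra {K L : Type*} [Field K] [Field L] [Algebra K L] [IsGalois K L]
    (M F : IntermediateField K L) [IsGalois K ↥M] [FiniteDimensional K ↥M]
    [IsGalois K ↥F] [FiniteDimensional K ↥F] (hFM : F ≤ M)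
    (e : (↥M ≃ₐ[K] ↥M) ≃* Equiv.Perm (Fin 3))
    (hF3 : Fintype.card (↥F ≃ₐ[K] ↥F) = 3) : False := by
  set πM := AlgEquiv.restrictNormalHom (F := K) (K₁ := L) ↥M with hπM
  set πF := AlgEquiv.restrictNormalHom (F := K) (K₁ := L) ↥F with hπF
  have h3Q : ∀ q : (↥F ≃ₐ[K] ↥F), q ^ 3 = 1 := fun q => by
    rw [← hF3]; exact pow_card_eq_one
  have hnt : Nontrivial (↥F ≃ₐ[K] ↥F) := Fintype.one_lt_card_iff_nontrivial.mp (by omega)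
  obtain ⟨q, hq⟩ := exists_ne (1 : ↥F ≃ₐ[K] ↥F)
  obtain ⟨σ, hσ⟩ := AlgEquiv.restrictNormalHom_surjective (K₁ := ↥F) L q
  obtain ⟨a, b, hab⟩ := perm3_cube (e (πM σ))
  obtain ⟨α, hα⟩ := AlgEquiv.restrictNormalHom_surjective (K₁ := ↥M) L (e.symm a)
  obtain ⟨β, hβ⟩ := AlgEquiv.restrictNormalHom_surjective (K₁ := ↥M) L (e.symm b)
  have hM : πM (α ^ 3 * β ^ 3) = πM σ := by
    apply e.injective
    simp only [map_mul, map_pow, hα, hβ, MulEquiv.apply_symm_apply]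
    convert hab using 2
    · exact congrArg (· ^ 3) ((congrArg e hα).trans (e.apply_symm_apply a))
    · exact congrArg (· ^ 3) ((congrArg e hβ).trans (e.apply_symm_apply b))
  have hFeq : πF (α ^ 3 * β ^ 3) = πF σ := by
    ext x
    have hx : (x : L) ∈ M := hFM x.2
    have key : (α ^ 3 * β ^ 3) (x : L) = σ (x : L) := by
      have h1 := congrArg (fun g : ↥M ≃ₐ[K] ↥M => ((g ⟨(x : L), hx⟩ : ↥M) : L)) hM
      simp only [hπM, AlgEquiv.restrictNormalHom_apply] at h1
      exact h1
    rw [hπF, AlgEquiv.restrictNormalHom_apply, AlgEquiv.restrictNormalHom_apply]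
    exact key
  have h1' : πF (α ^ 3 * β ^ 3) = 1 := by
    rw [map_mul, map_pow, map_pow, h3Q, h3Q, one_mul]
  exact hq (by rw [← hσ, ← hFeq, h1'])

/-- If `F ≤ M` are Galois over `K`, `Gal(M/K)` is `S₃` or `ℤ/3`, and `3 ∣ [F : K]`,
then `F = M`. -/
private lemma side {K L : Type*} [Field K] [Field L] [Algebra K L] [IsGalois K L]
    (M F : IntermediateField K L) [IsGalois K ↥M] [FiniteDimensional K ↥M]
    [Normal K ↥F] (hFM : F ≤ M)
    (hGM : Nonempty ((↥M ≃ₐ[K] ↥M) ≃* Equiv.Perm (Fin 3)) ∨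
      Nonempty ((↥M ≃ₐ[K] ↥M) ≃* Multiplicative (ZMod 3)))
    (h3 : 3 ∣ Module.finrank K ↥F) : F = M := by
  haveI : FiniteDimensional K ↥F :=
    FiniteDimensional.of_injective (IntermediateField.inclusion hFM).toLinearMap
      (IntermediateField.inclusion hFM).toRingHom.injective
  haveI : Algebra.IsSeparable K ↥F := Algebra.isSeparable_tower_bot_of_isSeparable K ↥F L
  haveI : IsGalois K ↥F := ⟨⟩
  have hpos : 0 < finrank K ↥F := Module.finrank_pos
  have hdvd : finrank K ↥F ∣ finrank K ↥M :=
    ⟨IntermediateField.relfinrank F M, (IntermediateField.finrank_bot_mul_relfinrank hFM).symm⟩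
  have hcard : Fintype.card (↥M ≃ₐ[K] ↥M) = finrank K ↥M := by
    rw [← Nat.card_eq_fintype_card]; exact IsGalois.card_aut_eq_finrank K ↥M
  have hcardF : Fintype.card (↥F ≃ₐ[K] ↥F) = finrank K ↥F := by
    rw [← Nat.card_eq_fintype_card]; exact IsGalois.card_aut_eq_finrank K ↥F
  rcases hGM with ⟨⟨e⟩⟩ | ⟨⟨e⟩⟩
  · have h6 : finrank K ↥M = 6 := by
      rw [← hcard, Fintype.card_congr e.toEquiv, Fintype.card_perm, Fintype.card_fin]
      rfl
    rcases nat_36 h3 (h6 ▸ hdvd) with hF | hF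
    · exact absurd (s3_contra M F hFM e (by rw [hcardF, hF])) not_false
    · exact IntermediateField.eq_of_le_of_finrank_le hFM (by omega)
  · have h3' : finrank K ↥M = 3 := by
      rw [← hcard, Fintype.card_congr e.toEquiv]
      simp
    refine IntermediateField.eq_of_le_of_finrank_le hFM ?_
    rw [h3']
    omega

theorem stmt17 {K L : Type*} [Field K] [Field L] [Algebra K L] [IsGalois K L]
    (M M' : IntermediateField K L) [IsGalois K ↥M] [IsGalois K ↥M']
    [FiniteDimensional K ↥M] [FiniteDimensional K ↥M']
    (hMM' : M ≠ M')
    (hM3 : 3 ∣ Module.finrank K ↥M) (hM'3 : 3 ∣ Module.finrank K ↥M')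
    (hGM : Nonempty ((↥M ≃ₐ[K] ↥M) ≃* Equiv.Perm (Fin 3)) ∨
      Nonempty ((↥M ≃ₐ[K] ↥M) ≃* Multiplicative (ZMod 3)))
    (hGM' : Nonempty ((↥M' ≃ₐ[K] ↥M') ≃* Equiv.Perm (Fin 3)) ∨
      Nonempty ((↥M' ≃ₐ[K] ↥M') ≃* Multiplicative (ZMod 3))) :
    ¬ (3 ∣ Module.finrank K ↥(M ⊓ M')) ∧
      ∃ σ : L ≃ₐ[K] L,
        orderOf (AlgEquiv.restrictNormal σ ↥M) = 3 ∧
          orderOf (AlgEquiv.restrictNormal σ ↥M') = 3 := by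
  constructor
  · intro h3F
    have h1 : M ⊓ M' = M := side M (M ⊓ M') inf_le_left hGM h3F
    have h2 : M ⊓ M' = M' := side M' (M ⊓ M') inf_le_right hGM' h3F
    exact hMM' (h1.symm.trans h2)
  · obtain ⟨σ, h1, h2⟩ := aux_pair
      (AlgEquiv.restrictNormalHom (F := K) (K₁ := L) ↥M)
      (AlgEquiv.restrictNormalHom (F := K) (K₁ := L) ↥M')
      (AlgEquiv.restrictNormalHom_surjective (K₁ := ↥M) L)
      (AlgEquiv.restrictNormalHom_surjective (K₁ := ↥M') L)
      (card_cases hGM) (card_cases hGM')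
    exact ⟨σ, h1, h2⟩
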